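/- Let G(p) = Σ_{i=1}^{N} (1/κ_t)(1 − (σ²/(p κ_t r_i)) E₁(σ²/(p κ_t r_i)) e^{σ²/(p κ_t r_i)}) with r_i > 0, κ_t, σ² > 0. Then G(p) → N/κ_t as p → ∞, and consequently log₂(1 + G(p)/(1 + κ_r G(p))) → log₂(1 + N/(κ_t + κ_r N)) as p → ∞ for any κ_r ≥ 0. -/

import Mathlib

open MeasureTheory Filter

/-- The exponential integral `E₁(x) = ∫₁^∞ e^{−tx}/t dt`. -/
noncomputable def expInt (x : ℝ) : ℝ := ∫ t in Set.Ici (1 : ℝ), Real.exp (-(t * x)) / t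

lemma sqrt_le_exp (u : ℝ) (hu : 0 ≤ u) : Real.sqrt u ≤ Real.exp u := by
  have h1 : Real.sqrt u ≤ 1 + u := by
    nlinarith [Real.sq_sqrt hu, Real.sqrt_nonneg u]
  exact h1.trans (by linarith [Real.add_one_le_exp u])

lemma expInt_nonneg {x : ℝ} (hx : 0 < x) : 0 ≤ expInt x := by
  apply setIntegral_nonneg measurableSet_Ici
  intro t ht
  have : (0:ℝ) < t := lt_of_lt_of_le one_pos ht
  positivity

lemma pointwise_bound {x t : ℝ} (hx : 0 < x) (ht1 : 1 ≤ t) :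
    Real.exp (-(t*x)) / t ≤ t ^ (-(3:ℝ)/2) / Real.sqrt x := by
  have ht0 : (0:ℝ) < t := lt_of_lt_of_le one_pos ht1
  have htx : 0 < t * x := mul_pos ht0 hx
  have h1 : Real.exp (-(t*x)) ≤ (Real.sqrt (t*x))⁻¹ := by
    rw [Real.exp_neg]
    exact inv_anti₀ (Real.sqrt_pos.2 htx) (sqrt_le_exp _ htx.le)
  have hrw : t ^ (-(3:ℝ)/2) = (t * Real.sqrt t)⁻¹ := by
    rw [show (-(3:ℝ)/2) = -(1 + 1/2) by norm_num, Real.rpow_neg ht0.le,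
      Real.rpow_add ht0, Real.rpow_one, ← Real.sqrt_eq_rpow]
  rw [hrw]
  have h2 : Real.exp (-(t*x)) / t ≤ (Real.sqrt (t*x))⁻¹ / t :=
    div_le_div_of_nonneg_right h1 ht0.le
  refine h2.trans_eq ?_
  rw [Real.sqrt_mul ht0.le]
  rw [mul_inv, div_eq_mul_inv, div_eq_mul_inv, mul_inv]
  ring

lemma expInt_le {x : ℝ} (hx : 0 < x) :
    expInt x ≤ (∫ t in Set.Ici (1:ℝ), t ^ (-(3:ℝ)/2)) / Real.sqrt x := by
  have hsx : 0 < Real.sqrt x := Real.sqrt_pos.2 hx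
  have hgint : IntegrableOn (fun t : ℝ => t ^ (-(3:ℝ)/2) / Real.sqrt x) (Set.Ici 1) := by
    rw [integrableOn_Ici_iff_integrableOn_Ioi]
    exact (integrableOn_Ioi_rpow_of_lt (by norm_num) one_pos).div_const _
  have hfint : IntegrableOn (fun t : ℝ => Real.exp (-(t*x)) / t) (Set.Ici 1) := by
    refine Integrable.mono hgint ?_ ?_
    · apply Measurable.aestronglyMeasurable
      measurability
    · rw [ae_restrict_iff' measurableSet_Ici]
      filter_upwards with t
      intro ht
      have ht0 : (0:ℝ) < t := lt_of_lt_of_le one_pos ht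
      rw [Real.norm_eq_abs, Real.norm_eq_abs, abs_of_nonneg (by positivity),
        abs_of_nonneg (by positivity)]
      exact pointwise_bound hx ht
  have := setIntegral_mono_on hfint hgint measurableSet_Ici
    (fun t ht => pointwise_bound hx ht)
  rw [integral_div] at this
  exact this

lemma key_tendsto :
    Tendsto (fun x => x * expInt x * Real.exp x) (nhdsWithin 0 (Set.Ioi 0)) (nhds 0) := by
  set C : ℝ := ∫ t in Set.Ici (1:ℝ), t ^ (-(3:ℝ)/2) with hC
  have hupper : Tendsto (fun x : ℝ => C * Real.sqrt x * Real.exp x)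
      (nhdsWithin 0 (Set.Ioi 0)) (nhds 0) := by
    have : Continuous fun x : ℝ => C * Real.sqrt x * Real.exp x := by continuity
    have h0 := (this.tendsto 0).mono_left (nhdsWithin_le_nhds (s := Set.Ioi (0:ℝ)))
    simpa using h0
  refine tendsto_of_tendsto_of_tendsto_of_le_of_le' tendsto_const_nhds hupper ?_ ?_
  · filter_upwards [self_mem_nhdsWithin] with x hx
    have hx : (0:ℝ) < x := hx
    have := expInt_nonneg hx
    positivity
  · filter_upwards [self_mem_nhdsWithin] with x hx
    have hx : (0:ℝ) < x := hx
    have h1 : x * expInt x ≤ x * (C / Real.sqrt x) :=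
      mul_le_mul_of_nonneg_left (expInt_le hx) hx.le
    have h2 : x * (C / Real.sqrt x) = C * Real.sqrt x := by
      rw [mul_div_assoc', mul_comm x C, mul_div_assoc, Real.div_sqrt]
    calc x * expInt x * Real.exp x ≤ x * (C / Real.sqrt x) * Real.exp x :=
          mul_le_mul_of_nonneg_right h1 (Real.exp_pos x).le
      _ = C * Real.sqrt x * Real.exp x := by rw [h2]

/-- with
`G(p) = Σᵢ (1/κ_t)(1 − (σ²/(pκ_t rᵢ)) E₁(σ²/(pκ_t rᵢ)) e^{σ²/(pκ_t rᵢ)})`,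
`rᵢ > 0`, one has `G(p) → N/κ_t` as `p → ∞`, and consequently
`log₂(1 + G(p)/(1+κ_r G(p))) → log₂(1 + N/(κ_t + κ_r N))`. -/
theorem capacity_upper_bound_high_power
    (N : ℕ) (hN : 0 < N) (r : Fin N → ℝ) (hr : ∀ i, 0 < r i)
    (κt σ2 : ℝ) (hκt : 0 < κt) (hσ : 0 < σ2) (κr : ℝ) (hκr : 0 ≤ κr)
    (G : ℝ → ℝ)
    (hG : G = fun p => ∑ i, (1 / κt) *
        (1 - (σ2 / (p * κt * r i)) * expInt (σ2 / (p * κt * r i))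
          * Real.exp (σ2 / (p * κt * r i)))) :
    Tendsto G atTop (nhds ((N : ℝ) / κt)) ∧
    Tendsto (fun p => Real.logb 2 (1 + G p / (1 + κr * G p))) atTop
      (nhds (Real.logb 2 (1 + (N : ℝ) / (κt + κr * N)))) := by
  have hpart1 : Tendsto G atTop (nhds ((N : ℝ) / κt)) := by
    rw [hG]
    have hsum : ((N : ℝ) / κt) = ∑ _i : Fin N, (1 / κt) * (1 - 0) := by
      simp [Finset.sum_const, Finset.card_univ, nsmul_eq_mul, mul_one_div, div_eq_mul_inv]
    rw [hsum]
    apply tendsto_finset_sum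
    intro i _
    have hx : Tendsto (fun p : ℝ => σ2 / (p * κt * r i)) atTop
        (nhdsWithin 0 (Set.Ioi 0)) := by
      rw [tendsto_nhdsWithin_iff]
      constructor
      · have h0 : Tendsto (fun p : ℝ => (σ2 / (κt * r i)) * p⁻¹) atTop (nhds 0) := by
          simpa using tendsto_inv_atTop_zero.const_mul (σ2 / (κt * r i))
        exact h0.congr fun p => by ring
      · filter_upwards [eventually_gt_atTop (0:ℝ)] with p hp
        have := hr i
        have : 0 < σ2 / (p * κt * r i) := by positivity
        exact this
    have hcomp : Tendsto (fun p : ℝ =>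
        (σ2 / (p * κt * r i)) * expInt (σ2 / (p * κt * r i))
          * Real.exp (σ2 / (p * κt * r i))) atTop (nhds 0) := by
      have := key_tendsto.comp hx
      simpa [Function.comp_def] using this
    exact (tendsto_const_nhds.sub hcomp).const_mul (1 / κt)
  refine ⟨hpart1, ?_⟩
  set L0 : ℝ := (N : ℝ) / κt with hL0
  have hL0pos : 0 < L0 := by positivity
  have hden : (0:ℝ) < 1 + κr * L0 := by positivity
  have hinner : Tendsto (fun p => 1 + G p / (1 + κr * G p)) atTop
      (nhds (1 + L0 / (1 + κr * L0))) :=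
    tendsto_const_nhds.add (hpart1.div
      (tendsto_const_nhds.add (hpart1.const_mul κr)) hden.ne')
  have hL1pos : 0 < 1 + L0 / (1 + κr * L0) := by positivity
  have heq : 1 + L0 / (1 + κr * L0) = 1 + (N : ℝ) / (κt + κr * N) := by
    have h1 : (0:ℝ) < κt + κr * N := by positivity
    rw [hL0]
    field_simp
  have hlog : Tendsto (fun p => Real.log (1 + G p / (1 + κr * G p))) atTop
      (nhds (Real.log (1 + L0 / (1 + κr * L0)))) :=
    (Real.continuousAt_log hL1pos.ne').tendsto.comp hinner
  have := hlog.div_const (Real.log 2)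
  rw [heq] at this
  simpa [Real.logb] using this
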